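/- arXiv:2011.03878 — 5 statements merged into one kernel-verified Lean document; each statement's English description precedes it below -/
import Mathlib

section
/- If u is strictly concave and differentiable, then for any two payment-price vectors z'' = (τ'', p₁'', p₂'') and z' = (τ', p₁', p₂') whose value functions V(w,z) = max_b u(w - p₁ - τ - b) + u(w + p₂ + (1+r)b) satisfy V(w₀, z'') ≥ V(w₀, z') for some type w₀, and whose present discounted values satisfy m'' ≤ m' (where m = -p₁ - τ + p₂/(1+r)), the difference V(w, z'') - V(w, z') is nondecreasing in w; i.e., preferences over payment-price vectors satisfy single crossing in type. -/
/-- Value of the two-period savings problem given payment-price vector `(τ, p₁, p₂)`. -/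
noncomputable def savingsValue (u : ℝ → ℝ) (r w τ p₁ p₂ : ℝ) : ℝ :=
  ⨆ b : ℝ, (u (w - p₁ - τ - b) + u (w + p₂ + (1 + r) * b))

/-- Present discounted value of a payment-price vector. -/
noncomputable def pdv (r τ p₁ p₂ : ℝ) : ℝ := -p₁ - τ + p₂ / (1 + r)

/-- Indirect utility as a function of lifetime wealth `M`. -/
noncomputable def Gv (u : ℝ → ℝ) (r M : ℝ) : ℝ :=
  ⨆ c : ℝ, (u c + u ((1 + r) * (M - c)))

/-- Joint concavity of the objective in `(c, M)`. -/
lemma mix_le (u : ℝ → ℝ) (hu : ConcaveOn ℝ Set.univ u) (r M₁ M₂ c₁ c₂ la mu : ℝ)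
    (hla : 0 ≤ la) (hmu : 0 ≤ mu) (hsum : la + mu = 1) :
    la * (u c₁ + u ((1 + r) * (M₁ - c₁))) + mu * (u c₂ + u ((1 + r) * (M₂ - c₂)))
      ≤ u (la * c₁ + mu * c₂)
        + u ((1 + r) * ((la * M₁ + mu * M₂) - (la * c₁ + mu * c₂))) := by
  have h1 := hu.2 (Set.mem_univ c₁) (Set.mem_univ c₂) hla hmu hsum
  have h2 := hu.2 (Set.mem_univ ((1 + r) * (M₁ - c₁)))
    (Set.mem_univ ((1 + r) * (M₂ - c₂))) hla hmu hsum
  simp only [smul_eq_mul] at h1 h2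
  have e : (1 + r) * ((la * M₁ + mu * M₂) - (la * c₁ + mu * c₂))
      = la * ((1 + r) * (M₁ - c₁)) + mu * ((1 + r) * (M₂ - c₂)) := by ring
  rw [e]
  linarith

/-- If the objective is unbounded above for one wealth level, it is unbounded for all. -/
lemma unbdd_all (u : ℝ → ℝ) (hu : ConcaveOn ℝ Set.univ u) (r b : ℝ)
    (hb : ¬ BddAbove (Set.range fun c : ℝ => u c + u ((1 + r) * (b - c))))
    (x : ℝ) :
    ¬ BddAbove (Set.range fun c : ℝ => u c + u ((1 + r) * (x - c))) := by
  rw [not_bddAbove_iff] at hb ⊢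
  intro N
  obtain ⟨y, ⟨c, rfl⟩, hy⟩ := hb (2 * N - (u 0 + u ((1 + r) * ((2 * x - b) - 0))))
  refine ⟨_, ⟨c / 2, rfl⟩, ?_⟩
  have h := mix_le u hu r b (2 * x - b) c 0 (1/2) (1/2) (by norm_num) (by norm_num)
    (by norm_num)
  have e1 : (1:ℝ)/2 * b + 1/2 * (2 * x - b) = x := by ring
  have e2 : (1:ℝ)/2 * c + 1/2 * 0 = c / 2 := by ring
  rw [e1, e2] at h
  have hy' : 2 * N - (u 0 + u ((1 + r) * ((2 * x - b) - 0))) < u c + u ((1 + r) * (b - c)) := hy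
  show N < u (c / 2) + u ((1 + r) * (x - c / 2))
  linarith

/-- Change of variables: the savings value equals `Gv` at lifetime wealth. -/
lemma savingsValue_eq (u : ℝ → ℝ) (r : ℝ) (hr : 0 < r) (w τ p₁ p₂ : ℝ) :
    savingsValue u r w τ p₁ p₂ = Gv u r ((1 + 1 / (1 + r)) * w + pdv r τ p₁ p₂) := by
  have hne : (1:ℝ) + r ≠ 0 := by positivity
  have hrange : (Set.range fun b : ℝ => u (w - p₁ - τ - b) + u (w + p₂ + (1 + r) * b))
      = Set.range fun c : ℝ =>
          u c + u ((1 + r) * ((1 + 1 / (1 + r)) * w + pdv r τ p₁ p₂ - c)) := by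
    ext y
    simp only [Set.mem_range]
    constructor
    · rintro ⟨b, rfl⟩
      refine ⟨w - p₁ - τ - b, ?_⟩
      have e2 : (1 + r) * ((1 + 1 / (1 + r)) * w + pdv r τ p₁ p₂ - (w - p₁ - τ - b))
          = w + p₂ + (1 + r) * b := by
        unfold pdv; field_simp; ring
      rw [e2]
    · rintro ⟨c, rfl⟩
      refine ⟨w - p₁ - τ - c, ?_⟩
      have e1 : w - p₁ - τ - (w - p₁ - τ - c) = c := by ring
      have e2 : w + p₂ + (1 + r) * (w - p₁ - τ - c)
          = (1 + r) * ((1 + 1 / (1 + r)) * w + pdv r τ p₁ p₂ - c) := by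
        unfold pdv; field_simp; ring
      rw [e1, e2]
  unfold savingsValue Gv
  rw [iSup, iSup, hrange]

/-- Concavity increments: `Gv a + Gv (b+δ) ≤ Gv (a+δ) + Gv b` when everything is bounded. -/
lemma key_ineq (u : ℝ → ℝ) (hu : ConcaveOn ℝ Set.univ u) (r : ℝ)
    (hbdd : ∀ M : ℝ, BddAbove (Set.range fun c : ℝ => u c + u ((1 + r) * (M - c))))
    (a b δ : ℝ) (hab : a ≤ b) (hδ : 0 ≤ δ) :
    Gv u r a + Gv u r (b + δ) ≤ Gv u r (a + δ) + Gv u r b := by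
  rcases eq_or_lt_of_le (by linarith : (0:ℝ) ≤ b - a + δ) with hs | hs
  · have hb : b = a := by linarith
    have hd : δ = 0 := by linarith
    subst hb hd
    simp
  set s : ℝ := b - a + δ with hsdef
  set la : ℝ := (b - a) / s with hla
  set mu : ℝ := δ / s with hmu
  have hsne : s ≠ 0 := ne_of_gt hs
  have hla0 : 0 ≤ la := div_nonneg (by linarith) (le_of_lt hs)
  have hmu0 : 0 ≤ mu := div_nonneg hδ (le_of_lt hs)
  have hsum : la + mu = 1 := by rw [hla, hmu, ← add_div, div_eq_one_iff_eq hsne, hsdef]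
  have eM1 : la * a + mu * (b + δ) = a + δ := by
    rw [hla, hmu, div_mul_eq_mul_div, div_mul_eq_mul_div, ← add_div, div_eq_iff hsne, hsdef]; ring
  have eM2 : mu * a + la * (b + δ) = b := by
    rw [hla, hmu, div_mul_eq_mul_div, div_mul_eq_mul_div, ← add_div, div_eq_iff hsne, hsdef]; ring
  have main : ∀ c₁ c₂ : ℝ,
      (u c₁ + u ((1 + r) * (a - c₁))) + (u c₂ + u ((1 + r) * ((b + δ) - c₂)))
        ≤ Gv u r (a + δ) + Gv u r b := by
    intro c₁ c₂
    have h1 := mix_le u hu r a (b + δ) c₁ c₂ la mu hla0 hmu0 hsum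
    have h2 := mix_le u hu r a (b + δ) c₁ c₂ mu la hmu0 hla0 (by linarith)
    rw [eM1] at h1
    rw [eM2] at h2
    have g1 : u (la * c₁ + mu * c₂) + u ((1 + r) * ((a + δ) - (la * c₁ + mu * c₂)))
        ≤ Gv u r (a + δ) := le_ciSup (hbdd (a + δ)) (la * c₁ + mu * c₂)
    have g2 : u (mu * c₁ + la * c₂) + u ((1 + r) * (b - (mu * c₁ + la * c₂)))
        ≤ Gv u r b := le_ciSup (hbdd b) (mu * c₁ + la * c₂)
    have eA : la * (u c₁ + u ((1 + r) * (a - c₁))) + mu * (u c₁ + u ((1 + r) * (a - c₁)))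
        = u c₁ + u ((1 + r) * (a - c₁)) := by rw [← add_mul, hsum, one_mul]
    have eB : la * (u c₂ + u ((1 + r) * ((b + δ) - c₂)))
          + mu * (u c₂ + u ((1 + r) * ((b + δ) - c₂)))
        = u c₂ + u ((1 + r) * ((b + δ) - c₂)) := by rw [← add_mul, hsum, one_mul]
    linarith
  have h3 : Gv u r (b + δ) ≤ (Gv u r (a + δ) + Gv u r b) - Gv u r a := by
    apply ciSup_le
    intro c₂
    have h4 : Gv u r a ≤ (Gv u r (a + δ) + Gv u r b)
        - (u c₂ + u ((1 + r) * ((b + δ) - c₂))) := by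
      apply ciSup_le
      intro c₁
      linarith [main c₁ c₂]
    linarith
  linarith

/-- Single crossing of preferences over payment-price vectors in type. -/
theorem stmt0 (u : ℝ → ℝ) (r : ℝ) (hr : 0 < r)
    (hu : StrictConcaveOn ℝ Set.univ u) (hud : Differentiable ℝ u)
    (τ'' p₁'' p₂'' τ' p₁' p₂' w₀ : ℝ)
    (hw₀ : savingsValue u r w₀ τ' p₁' p₂' ≤ savingsValue u r w₀ τ'' p₁'' p₂'')
    (hm : pdv r τ'' p₁'' p₂'' ≤ pdv r τ' p₁' p₂') :
    Monotone (fun w => savingsValue u r w τ'' p₁'' p₂'' - savingsValue u r w τ' p₁' p₂') := by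
  have hc := hu.concaveOn
  intro w' w hw
  simp only
  rw [savingsValue_eq u r hr w' τ'' p₁'' p₂'', savingsValue_eq u r hr w' τ' p₁' p₂',
      savingsValue_eq u r hr w τ'' p₁'' p₂'', savingsValue_eq u r hr w τ' p₁' p₂']
  have hr1 : (0:ℝ) < 1 + r := by linarith
  set k : ℝ := 1 + 1 / (1 + r) with hk
  have hk0 : 0 < k := by positivity
  set m2 := pdv r τ'' p₁'' p₂'' with hm2
  set m1 := pdv r τ' p₁' p₂' with hm1
  by_cases hbdd : ∀ M : ℝ, BddAbove (Set.range fun c : ℝ => u c + u ((1 + r) * (M - c)))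
  · have hab : k * w' + m2 ≤ k * w + m2 := by
      have := mul_le_mul_of_nonneg_left hw (le_of_lt hk0)
      linarith
    have hkey := key_ineq u hc r hbdd (k * w' + m2) (k * w + m2) (m1 - m2) hab
      (by linarith)
    have e1 : k * w' + m2 + (m1 - m2) = k * w' + m1 := by ring
    have e2 : k * w + m2 + (m1 - m2) = k * w + m1 := by ring
    rw [e1, e2] at hkey
    linarith
  · push_neg at hbdd
    obtain ⟨M₀, hM₀⟩ := hbdd
    have hall : ∀ M : ℝ, Gv u r M = 0 := fun M =>
      Real.iSup_of_not_bddAbove (unbdd_all u hc r M₀ hM₀ M)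
    simp [hall]
end

section
/- For the two-period savings problem with strictly concave differentiable u, if two payment-price vectors z' and z'' have present discounted values m' > m'', then the optimal second-period consumption under z' exceeds that under z'', and consequently V₁(w, z') < V₁(w, z'') for all w, where V₁ denotes the partial derivative of the value function in w. -/
/-- Tangent line inequality for a function with strictly decreasing derivative. -/
lemma tangent_le (u : ℝ → ℝ) (hud : Differentiable ℝ u) (hu' : StrictAnti (deriv u))
    (c c₀ : ℝ) : u c ≤ u c₀ + deriv u c₀ * (c - c₀) := by
  rcases lt_trichotomy c c₀ with h | h | h
  · obtain ⟨ξ, hξ, hξe⟩ := exists_deriv_eq_slope u h hud.continuous.continuousOn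
      (fun x _ => (hud x).differentiableWithinAt)
    have h1 : deriv u c₀ < deriv u ξ := hu' hξ.2
    have h2 : deriv u ξ * (c₀ - c) = u c₀ - u c :=
      (eq_div_iff (sub_ne_zero.mpr h.ne')).mp hξe
    nlinarith
  · simp [h]
  · obtain ⟨ξ, hξ, hξe⟩ := exists_deriv_eq_slope u h hud.continuous.continuousOn
      (fun x _ => (hud x).differentiableWithinAt)
    have h1 : deriv u ξ < deriv u c₀ := hu' hξ.1
    have h2 : deriv u ξ * (c - c₀) = u c - u c₀ :=
      (eq_div_iff (sub_ne_zero.mpr h.ne')).mp hξe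
    nlinarith

/-- First-order condition at an unconstrained maximum. -/
lemma foc (u : ℝ → ℝ) (hud : Differentiable ℝ u) (r A B b₀ : ℝ)
    (hb : IsMaxOn (fun b => u (A - b) + u (B + (1 + r) * b)) Set.univ b₀) :
    deriv u (A - b₀) = (1 + r) * deriv u (B + (1 + r) * b₀) := by
  have hA : HasDerivAt (fun b : ℝ => A - b) (-1) b₀ := by
    simpa using (hasDerivAt_id' (x := b₀)).const_sub A
  have hB : HasDerivAt (fun b : ℝ => B + (1 + r) * b) (1 + r) b₀ := by
    have h := ((hasDerivAt_id' (x := b₀)).const_mul (1 + r)).const_add B; rwa [mul_one] at h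
  have h1 : HasDerivAt (fun b => u (A - b) + u (B + (1 + r) * b))
      (deriv u (A - b₀) * (-1) + deriv u (B + (1 + r) * b₀) * (1 + r)) b₀ :=
    ((hud _).hasDerivAt.comp b₀ hA).add ((hud _).hasDerivAt.comp b₀ hB)
  have h0 := (hb.isLocalMax Filter.univ_mem).hasDerivAt_eq_zero h1
  linarith [h0]

lemma value_eq (f : ℝ → ℝ) (b₀ : ℝ) (hb : IsMaxOn f Set.univ b₀) : (⨆ b, f b) = f b₀ := by
  refine le_antisymm (ciSup_le fun b => isMaxOn_iff.mp hb b trivial) ?_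
  exact le_ciSup ⟨f b₀, by rintro y ⟨b, rfl⟩; exact isMaxOn_iff.mp hb b trivial⟩ b₀

/-- Envelope theorem: the value function is differentiable in `w` with derivative
`u'(c₁) + u'(c₂)` at the optimum. -/
lemma hasDerivAt_value (u : ℝ → ℝ) (hud : Differentiable ℝ u) (hu' : StrictAnti (deriv u))
    (r τ p₁ p₂ : ℝ) (b : ℝ → ℝ)
    (hb : ∀ w, IsMaxOn (fun b => u (w - p₁ - τ - b) + u (w + p₂ + (1 + r) * b))
      Set.univ (b w)) (w : ℝ) :
    HasDerivAt (fun x => savingsValue u r x τ p₁ p₂)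
      (deriv u (w - p₁ - τ - b w) + deriv u (w + p₂ + (1 + r) * b w)) w := by
  set c₁ := w - p₁ - τ - b w with hc₁
  set c₂ := w + p₂ + (1 + r) * b w with hc₂
  set L := deriv u c₁ + deriv u c₂ with hL
  have hfoc : deriv u c₁ = (1 + r) * deriv u c₂ := foc u hud r (w - p₁ - τ) (w + p₂) (b w) (hb w)
  set φ : ℝ → ℝ := fun x => u (x - p₁ - τ - b w) + u (x + p₂ + (1 + r) * b w) with hφ
  have hVw : savingsValue u r w τ p₁ p₂ = u c₁ + u c₂ := value_eq _ _ (hb w)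
  have hlow : ∀ x, φ x ≤ savingsValue u r x τ p₁ p₂ := by
    intro x
    exact le_ciSup ⟨_, by rintro y ⟨β, rfl⟩; exact isMaxOn_iff.mp (hb x) β trivial⟩ (b w)
  have hup : ∀ x, savingsValue u r x τ p₁ p₂ ≤ savingsValue u r w τ p₁ p₂ + L * (x - w) := by
    intro x
    refine ciSup_le fun β => ?_
    have t1 := tangent_le u hud hu' (x - p₁ - τ - β) c₁
    have t2 := tangent_le u hud hu' (x + p₂ + (1 + r) * β) c₂
    have key : deriv u c₁ * ((x - p₁ - τ - β) - c₁) + deriv u c₂ * ((x + p₂ + (1 + r) * β) - c₂)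
        = L * (x - w) := by
      rw [hL, hfoc, hc₁, hc₂]; ring
    rw [hVw]; linarith
  have hφd : HasDerivAt φ L w := by
    have h1 : HasDerivAt (fun x : ℝ => x - p₁ - τ - b w) 1 w :=
      (((hasDerivAt_id w).sub_const p₁).sub_const τ).sub_const (b w)
    have h2 : HasDerivAt (fun x : ℝ => x + p₂ + (1 + r) * b w) 1 w :=
      ((hasDerivAt_id w).add_const p₂).add_const ((1 + r) * b w)
    have h3 := ((hud _).hasDerivAt.comp w h1).add ((hud _).hasDerivAt.comp w h2)
    simp only [Function.comp_def, mul_one] at h3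
    exact h3
  rw [hasDerivAt_iff_isLittleO]
  have hφo := hasDerivAt_iff_isLittleO.mp hφd
  have hφww : φ w = savingsValue u r w τ p₁ p₂ := by rw [hVw]
  refine (Asymptotics.isBigO_of_le _ fun x => ?_).trans_isLittleO hφo
  have h1 : savingsValue u r x τ p₁ p₂ - savingsValue u r w τ p₁ p₂ - (x - w) • L ≤ 0 := by
    have := hup x; simp only [smul_eq_mul]; linarith
  have h2 : φ x - φ w - (x - w) • L ≤
      savingsValue u r x τ p₁ p₂ - savingsValue u r w τ p₁ p₂ - (x - w) • L := by
    have := hlow x; rw [hφww]; linarith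
  rw [Real.norm_eq_abs, Real.norm_eq_abs]
  have h3 := abs_of_nonpos h1
  have h4 := neg_le_abs (φ x - φ w - (x - w) • L)
  linarith

/-- Higher PDV yields higher optimal second-period consumption and lower
marginal value of income `V₁`. -/
theorem stmt2 (u : ℝ → ℝ) (r : ℝ) (hr : 0 < r)
    (hu : StrictConcaveOn ℝ Set.univ u) (hud : Differentiable ℝ u)
    (hu' : StrictAnti (deriv u))
    (τ' p₁' p₂' τ'' p₁'' p₂'' : ℝ)
    (hm : pdv r τ'' p₁'' p₂'' < pdv r τ' p₁' p₂')
    (b' b'' : ℝ → ℝ)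
    (hb' : ∀ w, IsMaxOn
      (fun b => u (w - p₁' - τ' - b) + u (w + p₂' + (1 + r) * b)) Set.univ (b' w))
    (hb'' : ∀ w, IsMaxOn
      (fun b => u (w - p₁'' - τ'' - b) + u (w + p₂'' + (1 + r) * b)) Set.univ (b'' w)) :
    ∀ w, w + p₂'' + (1 + r) * b'' w < w + p₂' + (1 + r) * b' w ∧
      deriv (fun w => savingsValue u r w τ' p₁' p₂') w <
        deriv (fun w => savingsValue u r w τ'' p₁'' p₂'') w := by
  have hr1 : (0:ℝ) < 1 + r := by linarith
  intro w
  set c₁' := w - p₁' - τ' - b' w with hc1'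
  set c₂' := w + p₂' + (1 + r) * b' w with hc2'
  set c₁'' := w - p₁'' - τ'' - b'' w with hc1''
  set c₂'' := w + p₂'' + (1 + r) * b'' w with hc2''
  have hfoc' : deriv u c₁' = (1 + r) * deriv u c₂' :=
    foc u hud r (w - p₁' - τ') (w + p₂') (b' w) (hb' w)
  have hfoc'' : deriv u c₁'' = (1 + r) * deriv u c₂'' :=
    foc u hud r (w - p₁'' - τ'') (w + p₂'') (b'' w) (hb'' w)
  have hsum' : (1 + r) * c₁' + c₂' = (2 + r) * w + (1 + r) * pdv r τ' p₁' p₂' := by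
    have : (1 + r) * pdv r τ' p₁' p₂' = (1 + r) * (-p₁' - τ') + p₂' := by
      unfold pdv; field_simp
    rw [this, hc1', hc2']; ring
  have hsum'' : (1 + r) * c₁'' + c₂'' = (2 + r) * w + (1 + r) * pdv r τ'' p₁'' p₂'' := by
    have : (1 + r) * pdv r τ'' p₁'' p₂'' = (1 + r) * (-p₁'' - τ'') + p₂'' := by
      unfold pdv; field_simp
    rw [this, hc1'', hc2'']; ring
  have hmain : c₂'' < c₂' := by
    by_contra h
    push_neg at h
    have h1 : deriv u c₂'' ≤ deriv u c₂' := hu'.antitone h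
    have h2 : deriv u c₁'' ≤ deriv u c₁' := by
      rw [hfoc', hfoc'']; exact mul_le_mul_of_nonneg_left h1 (le_of_lt hr1)
    have h3 : c₁' ≤ c₁'' := (hu'.le_iff_ge).mp h2
    have h4 : (1 + r) * c₁' ≤ (1 + r) * c₁'' := mul_le_mul_of_nonneg_left h3 (le_of_lt hr1)
    have h5 := mul_lt_mul_of_pos_left hm hr1
    linarith
  refine ⟨hmain, ?_⟩
  have hd' := (hasDerivAt_value u hud hu' r τ' p₁' p₂' b' hb' w).deriv
  have hd'' := (hasDerivAt_value u hud hu' r τ'' p₁'' p₂'' b'' hb'' w).deriv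
  rw [hd', hd'', hfoc', hfoc'']
  have h6 : deriv u c₂' < deriv u c₂'' := hu' hmain
  nlinarith
end

section
/- In any housing market equilibrium, the allocation of individuals to locations is monotone: if w'' > w' and individual w' is assigned a location of quality h' while w'' is assigned a location of quality h'', then h'' ≥ h'. Formally, if h'' > h' with associated PDVs m'' < m', and a type w' weakly prefers (h'', m'') to (h', m'), i.e. h'' + V(w', m'') ≥ h' + V(w', m'), then every type w'' > w' satisfies h'' + V(w'', m'') ≥ h' + V(w'', m'), with strict inequality whenever the first preference is strict. -/
/-- Lemma 1 (monotone equilibrium): single crossing of preferences over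
location quality/PDV pairs in type. -/
theorem stmt4 (V V₁ : ℝ → ℝ → ℝ)
    (hVc : Continuous fun p : ℝ × ℝ => V p.1 p.2)
    (hVm : ∀ w, StrictMono (V w))
    (hV₁ : ∀ w m, HasDerivAt (fun w' => V w' m) (V₁ w m) w)
    (hV₁anti : ∀ w, StrictAnti (V₁ w))
    (h' h'' m' m'' w' w'' : ℝ)
    (hh : h' < h'') (hm : m'' < m') (hw : w' < w'') :
    (h' + V w' m' ≤ h'' + V w' m'' → h' + V w'' m' ≤ h'' + V w'' m'') ∧
    (h' + V w' m' < h'' + V w' m'' → h' + V w'' m' < h'' + V w'' m'') := by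
  set g : ℝ → ℝ := fun w => V w m' - V w m'' with hg
  have hderiv : ∀ w, HasDerivAt g (V₁ w m' - V₁ w m'') w := fun w =>
    (hV₁ w m').sub (hV₁ w m'')
  have hanti : StrictAnti g := by
    apply strictAnti_of_deriv_neg
    intro w
    rw [(hderiv w).deriv]
    have := hV₁anti w hm
    linarith
  have hgw : g w'' < g w' := hanti hw
  constructor
  · intro hle
    have : g w' ≤ h'' - h' := by simp only [hg]; linarith
    have : g w'' < h'' - h' := lt_of_lt_of_le hgw this
    simp only [hg] at this; linarith
  · intro hlt
    have : g w' < h'' - h' := by simp only [hg]; linarith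
    have : g w'' < h'' - h' := lt_trans hgw this
    simp only [hg] at this; linarith
end

section
/- Suppose two absolutely continuous value functions Û and Ũ on [w̲, w̄] satisfy Û(w̲) = Ũ(w̲), both satisfy an envelope formula U(w) = U(w̲) + ∫_{w̲}^{w} V₁(x, M(x)) dx where M is the associated money value and V₁(w, m) is strictly decreasing in m, and Û(w) > Ũ(w) iff M̂(w) > M̃(w). Then there cannot exist w'' > w' with Û(w') = Ũ(w') and Û(w) > Ũ(w) for all w in (w', w'']; consequently Û = Ũ and M̂ = M̃ everywhere. -/
lemma aux_nonpos (wlo whi : ℝ) (f : ℝ → ℝ) (hf : Continuous f)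
    (hsign : ∀ w ∈ Set.Icc wlo whi, (0 < ∫ x in wlo..w, f x) → f w < 0) :
    ∀ w ∈ Set.Icc wlo whi, (∫ x in wlo..w, f x) ≤ 0 := by
  set H : ℝ → ℝ := fun w => ∫ x in wlo..w, f x with hH
  have hHcont : Continuous H :=
    intervalIntegral.continuous_primitive (fun a b => hf.intervalIntegrable a b) wlo
  by_contra hcon
  push_neg at hcon
  obtain ⟨w₀, hw₀, hpos⟩ := hcon
  set S := Set.Icc wlo w₀ ∩ {w | H w ≤ 0} with hS
  have hSne : wlo ∈ S := by
    constructor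
    · exact ⟨le_refl _, hw₀.1⟩
    · simp [hH, intervalIntegral.integral_same]
  have hSbdd : BddAbove S := ⟨w₀, fun w hw => hw.1.2⟩
  have hSclosed : IsClosed S := isClosed_Icc.inter (isClosed_le hHcont continuous_const)
  have hw' : sSup S ∈ S := hSclosed.csSup_mem ⟨wlo, hSne⟩ hSbdd
  set w' := sSup S
  have hw'le : H w' ≤ 0 := hw'.2
  have hw'Icc : w' ∈ Set.Icc wlo w₀ := hw'.1
  have hlt : w' < w₀ := hw'Icc.2.lt_of_ne (fun h => absurd hpos (not_lt.2 (h ▸ hw'le)))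
  have hposOn : ∀ w ∈ Set.Ioc w' w₀, 0 < H w := by
    intro w hw
    by_contra hle
    push_neg at hle
    have hmem : w ∈ S := ⟨⟨hw'Icc.1.trans hw.1.le, hw.2⟩, hle⟩
    exact absurd (le_csSup hSbdd hmem) (not_le.2 hw.1)
  have hfneg : ∀ w ∈ Set.Ioo w' w₀, f w < 0 := fun w hwm =>
    hsign w ⟨hw'Icc.1.trans hwm.1.le, hwm.2.le.trans hw₀.2⟩ (hposOn w ⟨hwm.1, hwm.2.le⟩)
  have hint : 0 < ∫ x in w'..w₀, (-f) x :=
    intervalIntegral.intervalIntegral_pos_of_pos_on (hf.neg.intervalIntegrable _ _)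
      (fun x hx => neg_pos.2 (hfneg x hx)) hlt
  have hintneg : (∫ x in w'..w₀, f x) < 0 := by
    have h2 : (∫ x in w'..w₀, (-f) x) = -∫ x in w'..w₀, f x := by
      simp [intervalIntegral.integral_neg]
    rw [h2] at hint; linarith
  have hsplit : H w' + ∫ x in w'..w₀, f x = H w₀ :=
    intervalIntegral.integral_add_adjacent_intervals (hf.intervalIntegrable _ _)
      (hf.intervalIntegrable _ _)
  linarith

/-- Key step of Lemma 3: two value functions with the same starting value, both
satisfying the envelope formula with `V₁` strictly decreasing in the money value,
cannot separate; hence the value functions and money values coincide. -/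
theorem stmt8 (wlo whi : ℝ) (hw : wlo < whi)
    (V V₁ : ℝ → ℝ → ℝ)
    (hVm : ∀ w, StrictMono (V w))
    (hV₁anti : ∀ w, StrictAnti (V₁ w))
    (ℓ Mh Mt Uh Ut : ℝ → ℝ)
    (hUh : ∀ w, Uh w = ℓ w + V w (Mh w))
    (hUt : ∀ w, Ut w = ℓ w + V w (Mt w))
    (hch : Continuous fun x => V₁ x (Mh x))
    (hct : Continuous fun x => V₁ x (Mt x))
    (henvh : ∀ w ∈ Set.Icc wlo whi, Uh w = Uh wlo + ∫ x in wlo..w, V₁ x (Mh x))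
    (henvt : ∀ w ∈ Set.Icc wlo whi, Ut w = Ut wlo + ∫ x in wlo..w, V₁ x (Mt x))
    (h0 : Uh wlo = Ut wlo)
    (hiff : ∀ w, Uh w > Ut w ↔ Mh w > Mt w) :
    (¬ ∃ w' w'', wlo ≤ w' ∧ w' < w'' ∧ w'' ≤ whi ∧ Uh w' = Ut w' ∧
        ∀ w ∈ Set.Ioc w' w'', Uh w > Ut w) ∧
    (∀ w ∈ Set.Icc wlo whi, Uh w = Ut w ∧ Mh w = Mt w) := by
  set f : ℝ → ℝ := fun x => V₁ x (Mh x) - V₁ x (Mt x) with hfdef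
  have hf : Continuous f := hch.sub hct
  have hHeq : ∀ w ∈ Set.Icc wlo whi, Uh w - Ut w = ∫ x in wlo..w, f x := by
    intro w hwm
    rw [henvh w hwm, henvt w hwm, h0, hfdef,
      intervalIntegral.integral_sub (hch.intervalIntegrable _ _) (hct.intervalIntegrable _ _)]
    ring
  -- if Ut w > Uh w then Mt w > Mh w
  have hrev : ∀ w, Ut w > Uh w → Mt w > Mh w := by
    intro w hgt
    have h1 : ¬ Mh w > Mt w := fun h => absurd ((hiff w).2 h) (not_lt.2 hgt.le)
    rcases lt_or_eq_of_le (not_lt.1 h1) with h2 | h2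
    · exact h2
    · exfalso
      have : Uh w = Ut w := by rw [hUh, hUt, h2]
      linarith
  have key : ∀ w ∈ Set.Icc wlo whi, (∫ x in wlo..w, f x) = 0 := by
    intro w hwm
    have h1 : (∫ x in wlo..w, f x) ≤ 0 := by
      refine aux_nonpos wlo whi f hf ?_ w hwm
      intro u hu hposint
      have hgt : Uh u > Ut u := by have := hHeq u hu; linarith
      have hM := (hiff u).1 hgt
      have := (hV₁anti u) hM
      simpa [hfdef] using sub_neg.2 this
    have h2 : (∫ x in wlo..w, (-f) x) ≤ 0 := by
      refine aux_nonpos wlo whi (-f) hf.neg ?_ w hwm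
      intro u hu hposint
      have hneg : (∫ x in wlo..u, f x) < 0 := by
        have heq : (∫ x in wlo..u, (-f) x) = -∫ x in wlo..u, f x := by
          simp [intervalIntegral.integral_neg]
        rw [heq] at hposint; linarith
      have hgt : Ut u > Uh u := by have := hHeq u hu; linarith
      have hM := hrev u hgt
      have := (hV₁anti u) hM
      have hfu : 0 < f u := by simp only [hfdef]; linarith
      show (-f) u < 0
      simp only [Pi.neg_apply]
      linarith
    have h2' : (0:ℝ) ≤ ∫ x in wlo..w, f x := by
      have heq : (∫ x in wlo..w, (-f) x) = -∫ x in wlo..w, f x := by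
        simp [intervalIntegral.integral_neg]
      rw [heq] at h2; linarith
    linarith
  have part2 : ∀ w ∈ Set.Icc wlo whi, Uh w = Ut w ∧ Mh w = Mt w := by
    intro w hwm
    have hU : Uh w = Ut w := by have := hHeq w hwm; have := key w hwm; linarith
    refine ⟨hU, ?_⟩
    have hV : V w (Mh w) = V w (Mt w) := by
      have h1 := hUh w; have h2 := hUt w; linarith
    exact (hVm w).injective hV
  refine ⟨?_, part2⟩
  rintro ⟨w', w'', h1, h2, h3, h4, h5⟩
  have hU := (part2 w'' ⟨h1.trans h2.le, h3⟩).1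
  have := h5 w'' ⟨h2, le_refl _⟩
  linarith
end

section
/- In the model with rental homes, any equilibrium location allocation is monotone in type: since the single-crossing property 'if a lower type prefers a higher-quality, lower-PDV location, so does a higher type' holds regardless of whether a location is rented or owner-occupied (both renters and owners rank payment streams by PDV given the ability to borrow and save at rate r), the equilibrium assigns weakly higher location qualities to higher types. -/
/-- Lemma 8 (monotonicity with renters): when every location — rented or
owner-occupied — is evaluated by its quality and the PDV of its payment stream via a
value `V` strictly increasing in PDV and satisfying single crossing in type, any
equilibrium allocation assigns weakly higher location qualities to higher types. -/
theorem stmt17 (V : ℝ → ℝ → ℝ)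
    (hVm : ∀ w, StrictMono (V w))
    (hSC : ∀ m₂ m₁ : ℝ, m₂ < m₁ → StrictMono fun w => V w m₂ - V w m₁)
    (L : Set (ℝ × ℝ)) (a : ℝ → ℝ × ℝ)
    (ha : ∀ w, a w ∈ L)
    (hopt : ∀ w, ∀ l ∈ L, l.1 + V w l.2 ≤ (a w).1 + V w (a w).2) :
    Monotone fun w => (a w).1 := by
  intro w w' hww'
  rcases eq_or_lt_of_le hww' with rfl | hlt
  · exact le_rfl
  · by_contra hcon
    push_neg at hcon
    -- hcon : (a w').1 < (a w).1
    have h1 := hopt w (a w') (ha w')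
    have h2 := hopt w' (a w) (ha w)
    -- (a w').2 > (a w).2
    have hm : (a w).2 < (a w').2 := by
      have : V w' (a w).2 < V w' (a w').2 := by linarith
      exact (hVm w').lt_iff_lt.mp this
    have hsc := hSC (a w).2 (a w').2 hm hlt
    simp only at hsc
    linarith
end
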